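/- For each n ≥ 0 let Pyrnc(n) be the free category on the directed graph G^n whose vertices are the intervals [a;b] (0 ≤ a ≤ b ≤ n) of [n], with an edge [a;b] → [a+1;b] whenever a < b and an edge [a;b] → [a;b-1] whenever a < b. For a monotone map φ: [n] → [m], let Pyrnc(φ): Pyrnc(n) → Pyrnc(m) be the functor given on vertices by [a;b] ↦ [φ(a);φ(b)], sending the generating edge [a;b] → [a+1;b] to the path [φ(a);φ(b)] → [φ(a)+1;φ(b)] → ⋯ → [φ(a+1);φ(b)] of successive left-endpoint increments, and the generating edge [a;b] → [a;b-1] to the path [φ(a);φ(b)] → [φ(a);φ(b)-1] → ⋯ → [φ(a);φ(b-1)] of successive right-endpoint decrements. Then these assignments are functorial: Pyrnc(id_{[n]}) is the identity functor, and Pyrnc(ψ ∘ φ) = Pyrnc(ψ) ∘ Pyrnc(φ) for composable monotone maps; hence [n] ↦ Pyrnc(n) defines a functor from the simplex category Δ to the category of small categories. -/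

import Mathlib

open CategoryTheory

/-- The vertices of the graph `G^n`: the intervals `[a;b]` with `0 ≤ a ≤ b ≤ n`. -/
def PVert (n : ℕ) : Type := {p : ℕ × ℕ // p.1 ≤ p.2 ∧ p.2 ≤ n}

/-- The edges of the reflexive directed graph `G^n`: `[a;b] → [a+1;b]` and
`[a;b] → [a;b-1]`, whenever `a < b`. -/
inductive PEdge (n : ℕ) : PVert n → PVert n → Type
  | left (v w : PVert n) (h : v.val.1 < v.val.2) (h1 : w.val.1 = v.val.1 + 1)
      (h2 : w.val.2 = v.val.2) : PEdge n v w
  | right (v w : PVert n) (h : v.val.1 < v.val.2) (h1 : w.val.1 = v.val.1)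
      (h2 : w.val.2 = v.val.2 - 1) : PEdge n v w

instance (n : ℕ) : Quiver (PVert n) := ⟨PEdge n⟩

/-- `Pyrnc n` is the free category on the graph `G^n`. -/
abbrev Pyrnc (n : ℕ) := Paths (PVert n)

/-- Constructor for vertices. -/
def mkV {n : ℕ} (x y : ℕ) (h : x ≤ y ∧ y ≤ n) : PVert n := ⟨(x, y), h⟩

/-- The path `[x;y] → [x+1;y] → ⋯ → [x+d;y]` of successive left-endpoint increments. -/
def leftPath (m : ℕ) : (d x y : ℕ) → (h : x + d ≤ y) → (hy : y ≤ m) →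
    Quiver.Path (mkV (n := m) x y ⟨by omega, hy⟩) (mkV (x + d) y ⟨h, hy⟩)
  | 0, _, _, _, _ => Quiver.Path.nil
  | d+1, x, y, h, hy =>
      (leftPath m d x y (by omega) hy).cons (PEdge.left _ _ (show x + d < y by omega) rfl rfl)

/-- The path `[x;y] → [x;y-1] → ⋯ → [x;y-d]` of successive right-endpoint decrements. -/
def rightPath (m : ℕ) : (d x y : ℕ) → (h : x + d ≤ y) → (hy : y ≤ m) →
    Quiver.Path (mkV (n := m) x y ⟨by omega, hy⟩) (mkV x (y - d) ⟨by omega, by omega⟩)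
  | 0, _, _, _, _ => Quiver.Path.nil
  | d+1, x, y, h, hy =>
      (rightPath m d x y (by omega) hy).cons (PEdge.right _ _ (show x < y - d by omega) rfl rfl)

/-- The path of successive left-endpoint increments, from `[x;y]` to `[x';y']`
(with `y' = y`). -/
def leftPath' (m x y x' y' : ℕ) (hx : x ≤ x') (h : x' ≤ y) (hy : y ≤ m) (hy' : y' = y) :
    Quiver.Path (mkV (n := m) x y ⟨hx.trans h, hy⟩) (mkV x' y' ⟨by omega, by omega⟩) :=
  (leftPath m (x' - x) x y (by omega) hy).cast rfl (by
    apply Subtype.ext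
    show (x + (x' - x), y) = (x', y')
    rw [Prod.mk.injEq]
    omega)

/-- The path of successive right-endpoint decrements, from `[x;y]` to `[x';y']`
(with `x' = x`). -/
def rightPath' (m x y x' y' : ℕ) (hx' : x' = x) (h : x ≤ y') (hy' : y' ≤ y) (hy : y ≤ m) :
    Quiver.Path (mkV (n := m) x y ⟨h.trans hy', hy⟩) (mkV x' y' ⟨by omega, by omega⟩) :=
  (rightPath m (y - y') x y (by omega) hy).cast rfl (by
    apply Subtype.ext
    show (x, y - (y - y')) = (x', y')
    rw [Prod.mk.injEq]
    omega)

/-- The map on vertices `[a;b] ↦ [φ(a);φ(b)]` induced by a monotone map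
`φ : [n] → [m]`. -/
def vmap {n m : ℕ} (φ : Fin (n+1) →o Fin (m+1)) (v : PVert n) : PVert m :=
  mkV (φ ⟨v.val.1, by have := v.property; omega⟩).val
      (φ ⟨v.val.2, by have := v.property; omega⟩).val
      ⟨φ.monotone (Fin.mk_le_mk.mpr v.property.1), Nat.lt_succ_iff.mp (φ _).isLt⟩

/-- The prefunctor `G^n → Pyrnc m` induced by a monotone map `φ : [n] → [m]`: on
vertices `[a;b] ↦ [φ(a);φ(b)]`; the edge `[a;b] → [a+1;b]` goes to the path
`[φ(a);φ(b)] → [φ(a)+1;φ(b)] → ⋯ → [φ(a+1);φ(b)]` of successive left-endpoint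
increments, and the edge `[a;b] → [a;b-1]` to the path
`[φ(a);φ(b)] → [φ(a);φ(b)-1] → ⋯ → [φ(a);φ(b-1)]` of successive right-endpoint
decrements. -/
def pyrncPre {n m : ℕ} (φ : Fin (n+1) →o Fin (m+1)) : PVert n ⥤q Pyrnc m where
  obj v := vmap φ v
  map {v w} e :=
    match v, w, e with
    | v, w, .left _ _ h h1 h2 =>
        leftPath' m (φ ⟨v.val.1, by have := v.property; omega⟩).val
          (φ ⟨v.val.2, by have := v.property; omega⟩).val
          (φ ⟨w.val.1, by have := w.property; omega⟩).val
          (φ ⟨w.val.2, by have := w.property; omega⟩).val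
          (φ.monotone (Fin.mk_le_mk.mpr (by omega)))
          (φ.monotone (Fin.mk_le_mk.mpr (by omega)))
          (Nat.lt_succ_iff.mp (φ _).isLt)
          (congrArg (fun t : Fin (n+1) => (φ t).val) (Fin.mk_eq_mk.mpr h2))
    | v, w, .right _ _ h h1 h2 =>
        rightPath' m (φ ⟨v.val.1, by have := v.property; omega⟩).val
          (φ ⟨v.val.2, by have := v.property; omega⟩).val
          (φ ⟨w.val.1, by have := w.property; omega⟩).val
          (φ ⟨w.val.2, by have := w.property; omega⟩).val
          (congrArg (fun t : Fin (n+1) => (φ t).val) (Fin.mk_eq_mk.mpr h1))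
          (φ.monotone (Fin.mk_le_mk.mpr (by omega)))
          (φ.monotone (Fin.mk_le_mk.mpr (by omega)))
          (Nat.lt_succ_iff.mp (φ _).isLt)

/-- The functor `Pyrnc(φ) : Pyrnc n ⥤ Pyrnc m` induced by a monotone map
`φ : [n] → [m]`. -/
def PyrncMap {n m : ℕ} (φ : Fin (n+1) →o Fin (m+1)) : Pyrnc n ⥤ Pyrnc m :=
  Paths.lift (pyrncPre φ)

/-- The assignments `[n] ↦ Pyrnc(n)` (the free category on the graph
`G^n` of intervals of `[n]`) and `φ ↦ Pyrnc(φ)` are functorial: `Pyrnc(id) = 𝟭`, and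
`Pyrnc(ψ ∘ φ) = Pyrnc(φ) ⋙ Pyrnc(ψ)`; hence they define a functor from the simplex
category `Δ` to the category `Cat` of small categories. -/
-- auxiliary lemmas
lemma path_mono {n : ℕ} {v w : PVert n} (p : Quiver.Path v w) :
    v.val.1 ≤ w.val.1 ∧ w.val.2 ≤ v.val.2 := by
  induction p with
  | nil => exact ⟨le_refl _, le_refl _⟩
  | cons p e ih =>
    change PEdge _ _ _ at e
    cases e with
    | left h h1 h2 => omega
    | right h h1 h2 => omega

lemma path_self_nil {n : ℕ} {v : PVert n} (p : Quiver.Path v v) : p = Quiver.Path.nil := by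
  cases p with
  | nil => rfl
  | cons p e =>
    exfalso
    have hm := path_mono p
    change PEdge _ _ _ at e
    cases e with
    | left h h1 h2 => omega
    | right h h1 h2 => omega

theorem path_unique {n : ℕ} {v w : PVert n}
    (hfs : v.val.1 = w.val.1 ∨ v.val.2 = w.val.2)
    (p q : Quiver.Path v w) : p = q := by
  induction p with
  | nil => exact (path_self_nil q).symm
  | @cons u w' p e ih =>
    cases q with
    | nil => exact path_self_nil _
    | @cons u₂ _ q e₂ =>
      have hmp := path_mono p
      have hmq := path_mono q
      rcases hfs with hfs | hfs
      · -- all right edges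
        change PEdge _ _ _ at e
        cases e with
        | left h h1 h2 =>
          have hv := w'.property
          omega
        | right h h1 h2 =>
          change PEdge _ _ _ at e₂
          cases e₂ with
          | left h' h1' h2' =>
            have hv := w'.property
            omega
          | right h' h1' h2' =>
            obtain rfl : u₂ = u := by
              apply Subtype.ext
              have : u₂.val = (u₂.val.1, u₂.val.2) := rfl
              rw [this]
              have : u.val = (u.val.1, u.val.2) := rfl
              rw [this]
              have hu := u.property
              have hu2 := u₂.property
              rw [Prod.mk.injEq]
              omega
            rw [ih (Or.inl (by omega)) q]
      · -- all left edges
        change PEdge _ _ _ at e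
        cases e with
        | right h h1 h2 =>
          have hv := w'.property
          omega
        | left h h1 h2 =>
          change PEdge _ _ _ at e₂
          cases e₂ with
          | right h' h1' h2' =>
            have hv := w'.property
            omega
          | left h' h1' h2' =>
            obtain rfl : u₂ = u := by
              apply Subtype.ext
              have : u₂.val = (u₂.val.1, u₂.val.2) := rfl
              rw [this]
              have : u.val = (u.val.1, u.val.2) := rfl
              rw [this]
              rw [Prod.mk.injEq]
              omega
            rw [ih (Or.inr (by omega)) q]

lemma vmap_snd_eq {n m : ℕ} (φ : Fin (n+1) →o Fin (m+1)) {v w : PVert n}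
    (h : v.val.2 = w.val.2) : (vmap φ v).val.2 = (vmap φ w).val.2 := by
  exact congrArg (fun t : Fin (n+1) => (φ t).val) (Fin.mk_eq_mk.mpr h)

lemma vmap_fst_eq {n m : ℕ} (φ : Fin (n+1) →o Fin (m+1)) {v w : PVert n}
    (h : v.val.1 = w.val.1) : (vmap φ v).val.1 = (vmap φ w).val.1 := by
  exact congrArg (fun t : Fin (n+1) => (φ t).val) (Fin.mk_eq_mk.mpr h)

theorem pyrnc_id (n : ℕ) :
    PyrncMap (OrderHom.id : Fin (n+1) →o Fin (n+1)) = 𝟭 (Pyrnc n) := by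
  have hobj : (PyrncMap (OrderHom.id : Fin (n+1) →o Fin (n+1))).obj = (𝟭 (Pyrnc n)).obj := rfl
  refine Paths.ext_functor hobj ?_
  intro a b e
  change PEdge _ _ _ at e
  cases e with
  | left h h1 h2 => exact path_unique (Or.inr (vmap_snd_eq _ h2.symm)) _ _
  | right h h1 h2 => exact path_unique (Or.inl (vmap_fst_eq _ h1.symm)) _ _

theorem pyrnc_comp (n m l : ℕ) (φ : Fin (n+1) →o Fin (m+1)) (ψ : Fin (m+1) →o Fin (l+1)) :
    PyrncMap (ψ.comp φ) = PyrncMap φ ⋙ PyrncMap ψ := by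
  have hobj : (PyrncMap (ψ.comp φ)).obj = (PyrncMap φ ⋙ PyrncMap ψ).obj := rfl
  refine Paths.ext_functor hobj ?_
  intro a b e
  change PEdge _ _ _ at e
  cases e with
  | left h h1 h2 => exact path_unique (Or.inr (vmap_snd_eq _ h2.symm)) _ _
  | right h h1 h2 => exact path_unique (Or.inl (vmap_fst_eq _ h1.symm)) _ _

def PyrFun : SimplexCategory ⥤ Cat where
  obj x := Cat.of (Pyrnc x.len)
  map {_ _} f := (PyrncMap f.toOrderHom).toCatHom
  map_id x := congrArg Functor.toCatHom (pyrnc_id x.len)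
  map_comp {x y z} f g := congrArg Functor.toCatHom (pyrnc_comp x.len y.len z.len f.toOrderHom g.toOrderHom)

theorem statement14 :
    (∀ n : ℕ, PyrncMap (OrderHom.id : Fin (n+1) →o Fin (n+1)) = 𝟭 (Pyrnc n)) ∧
    (∀ (n m l : ℕ) (φ : Fin (n+1) →o Fin (m+1)) (ψ : Fin (m+1) →o Fin (l+1)),
      PyrncMap (ψ.comp φ) = PyrncMap φ ⋙ PyrncMap ψ) ∧
    (∃ (P : SimplexCategory ⥤ Cat)
        (hobj : ∀ n : ℕ, P.obj (SimplexCategory.mk n) = Cat.of (Pyrnc n)),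
      ∀ (n m : ℕ) (f : SimplexCategory.mk n ⟶ SimplexCategory.mk m),
        P.map f = eqToHom (hobj n) ≫
          ((PyrncMap f.toOrderHom).toCatHom : Cat.of (Pyrnc n) ⟶ Cat.of (Pyrnc m)) ≫
          eqToHom (hobj m).symm) := by

  refine ⟨pyrnc_id, fun n m l φ ψ => pyrnc_comp n m l φ ψ, PyrFun, fun n => rfl, ?_⟩
  intro n m f
  simp only [eqToHom_refl, Category.id_comp, Category.comp_id]
  rfl
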